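/- The symmetric map τ on [0,1] determined by τ(0) = 0, symmetry τ(1−x) = τ(x), and slopes on [0,1/2] equal to 2 on [0, x₁], 2/3 on [x₁, 1/4], 2 on [1/4, x₂], and 6 on [x₂, 1/2] — where x₁ is the point with τ(x₁) = 1/4 on the first piece (x₁ = 1/8) and x₂ the point with τ(x₂) = 3/4 on the third piece — satisfies τ(1/2) = 1 and preserves the density f = (1/2)·χ_{[0,1/4]∪[3/4,1]} + (3/2)·χ_{[1/4,3/4]}. -/

import Mathlib

open MeasureTheory Set ENNReal

noncomputable section

/-- The symmetric piecewise linear map τ for λ = 1/2, with slopes 2, 2/3, 2, 6 on [0,1/2]. -/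
def tauLhalf : ℝ → ℝ := fun x =>
  let y := if x ≤ 1/2 then x else 1 - x
  if y ≤ 1/8 then 2 * y
  else if y ≤ 1/4 then (2/3) * y + 1/6
  else if y ≤ 11/24 then 2 * y - 1/6
  else 6 * y - 2

/-- The density f = (1/2)·χ_{[0,1/4]∪[3/4,1]} + (3/2)·χ_{[1/4,3/4]}. -/
def densLhalf : ℝ → ℝ≥0∞ := fun x => if 1/4 ≤ x ∧ x ≤ 3/4 then 3/2 else 1/2

lemma tau_meas : Measurable tauLhalf := by
  have hy : Measurable (fun x : ℝ => if x ≤ 1/2 then x else 1 - x) :=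
    Measurable.ite (measurableSet_le measurable_id measurable_const) measurable_id
      (measurable_const.sub measurable_id)
  have hF : Measurable (fun y : ℝ => if y ≤ 1/8 then 2*y else if y ≤ 1/4 then (2/3)*y + 1/6
      else if y ≤ 11/24 then 2*y - 1/6 else 6*y - 2) := by
    apply Measurable.ite (measurableSet_le measurable_id measurable_const) (by fun_prop)
    apply Measurable.ite (measurableSet_le measurable_id measurable_const) (by fun_prop)
    exact Measurable.ite (measurableSet_le measurable_id measurable_const) (by fun_prop) (by fun_prop)
  exact hF.comp hy

lemma vol_affine (a b : ℝ) (ha : a ≠ 0) (S : Set ℝ) :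
    volume ((fun x => a * x + b) ⁻¹' S) = ENNReal.ofReal |a⁻¹| * volume S := by
  have h1 : (fun x : ℝ => a * x + b) ⁻¹' S = (a * ·) ⁻¹' ((· + b) ⁻¹' S) := rfl
  rw [h1, Real.volume_preimage_mul_left ha, measure_preimage_add_right]

lemma piece_integral (A : Set ℝ) (hA : MeasurableSet A) (a b : ℝ) (ha : a ≠ 0)
    (s R : Set ℝ) (hRm : MeasurableSet R) (c : ℝ≥0∞)
    (hτ : ∀ x ∈ s, tauLhalf x = a * x + b)
    (hd : ∀ x ∈ s, densLhalf x = c)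
    (hR : (fun x => a * x + b) ⁻¹' R = s) :
    ∫⁻ x in s ∩ tauLhalf ⁻¹' A, densLhalf x = c * ENNReal.ofReal |a⁻¹| * volume (R ∩ A) := by
  have h1 : s ∩ tauLhalf ⁻¹' A = (fun x => a * x + b) ⁻¹' (R ∩ A) := by
    rw [preimage_inter, hR]
    ext x
    simp only [mem_inter_iff, mem_preimage]
    constructor
    · rintro ⟨hx, hAx⟩; exact ⟨hx, by rw [← hτ x hx]; exact hAx⟩
    · rintro ⟨hx, hAx⟩; exact ⟨hx, by rw [hτ x hx]; exact hAx⟩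
  have hmg : Measurable (fun x : ℝ => a * x + b) := (measurable_id.const_mul a).add_const b
  rw [h1, setLIntegral_congr_fun (hmg (hRm.inter hA))
    (fun x hx => hd x (by rw [← hR]; exact mem_preimage.2 hx.1)),
    setLIntegral_const, vol_affine a b ha, ← mul_assoc]

lemma peel (T P Q S : Set ℝ) (hT : MeasurableSet T) (hQ : MeasurableSet Q)
    (hU : P ∪ Q = S) (hD : Disjoint P Q) :
    ∫⁻ x in S ∩ T, densLhalf x
      = (∫⁻ x in P ∩ T, densLhalf x) + ∫⁻ x in Q ∩ T, densLhalf x := by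
  rw [← hU, union_inter_distrib_right,
    lintegral_union (hQ.inter hT) (hD.mono inter_subset_left inter_subset_left)]

lemma const_on (T : Set ℝ) (hT : MeasurableSet T) (c : ℝ≥0∞)
    (h : ∀ x ∈ T, densLhalf x = c) : ∫⁻ x in T, densLhalf x = c * volume T := by
  rw [setLIntegral_congr_fun hT h, setLIntegral_const]

-- ofReal representations of ENNReal fractions
lemma e12 : (1/2 : ℝ≥0∞) = ENNReal.ofReal (1/2) := by
  rw [ENNReal.ofReal_div_of_pos (by norm_num)]; norm_num
lemma e32 : (3/2 : ℝ≥0∞) = ENNReal.ofReal (3/2) := by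
  rw [ENNReal.ofReal_div_of_pos (by norm_num)]; norm_num
lemma e14 : (1/4 : ℝ≥0∞) = ENNReal.ofReal (1/4) := by
  rw [ENNReal.ofReal_div_of_pos (by norm_num)]; norm_num
lemma e34 : (3/4 : ℝ≥0∞) = ENNReal.ofReal (3/4) := by
  rw [ENNReal.ofReal_div_of_pos (by norm_num)]; norm_num

lemma k1 : (1/2 : ℝ≥0∞) * ENNReal.ofReal |(2:ℝ)⁻¹| = 1/4 := by
  rw [show |(2:ℝ)⁻¹| = 1/2 by norm_num, e12, ← ENNReal.ofReal_mul (by norm_num),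
    show ((1:ℝ)/2*(1/2)) = 1/4 by norm_num, ← e14]
lemma k2 : (1/2 : ℝ≥0∞) * ENNReal.ofReal |((2:ℝ)/3)⁻¹| = 3/4 := by
  rw [show |((2:ℝ)/3)⁻¹| = 3/2 by norm_num, e12, ← ENNReal.ofReal_mul (by norm_num),
    show ((1:ℝ)/2*(3/2)) = 3/4 by norm_num, ← e34]
lemma k3 : (3/2 : ℝ≥0∞) * ENNReal.ofReal |(2:ℝ)⁻¹| = 3/4 := by
  rw [show |(2:ℝ)⁻¹| = 1/2 by norm_num, e32, ← ENNReal.ofReal_mul (by norm_num),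
    show ((3:ℝ)/2*(1/2)) = 3/4 by norm_num, ← e34]
lemma k4 : (3/2 : ℝ≥0∞) * ENNReal.ofReal |(6:ℝ)⁻¹| = 1/4 := by
  rw [show |(6:ℝ)⁻¹| = 1/6 by norm_num, e32, ← ENNReal.ofReal_mul (by norm_num),
    show ((3:ℝ)/2*(1/6)) = 1/4 by norm_num, ← e14]
lemma k5 : (3/2 : ℝ≥0∞) * ENNReal.ofReal |(-6:ℝ)⁻¹| = 1/4 := by
  rw [show |(-6:ℝ)⁻¹| = 1/6 by norm_num, e32, ← ENNReal.ofReal_mul (by norm_num),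
    show ((3:ℝ)/2*(1/6)) = 1/4 by norm_num, ← e14]
lemma k6 : (3/2 : ℝ≥0∞) * ENNReal.ofReal |(-2:ℝ)⁻¹| = 3/4 := by
  rw [show |(-2:ℝ)⁻¹| = 1/2 by norm_num, e32, ← ENNReal.ofReal_mul (by norm_num),
    show ((3:ℝ)/2*(1/2)) = 3/4 by norm_num, ← e34]
lemma k7 : (1/2 : ℝ≥0∞) * ENNReal.ofReal |(-((2:ℝ)/3))⁻¹| = 3/4 := by
  rw [show |(-((2:ℝ)/3))⁻¹| = 3/2 by norm_num, e12, ← ENNReal.ofReal_mul (by norm_num),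
    show ((1:ℝ)/2*(3/2)) = 3/4 by norm_num, ← e34]
lemma k8 : (1/2 : ℝ≥0∞) * ENNReal.ofReal |(-2:ℝ)⁻¹| = 1/4 := by
  rw [show |(-2:ℝ)⁻¹| = 1/2 by norm_num, e12, ← ENNReal.ofReal_mul (by norm_num),
    show ((1:ℝ)/2*(1/2)) = 1/4 by norm_num, ← e14]

lemma a1 : (1/2 : ℝ≥0∞) = 1/4 + 1/4 := by
  rw [e14, ← ENNReal.ofReal_add (by norm_num) (by norm_num),
    show ((1:ℝ)/4 + 1/4) = 1/2 by norm_num, ← e12]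
lemma a2 : (3/2 : ℝ≥0∞) = 3/4 + 3/4 := by
  rw [e34, ← ENNReal.ofReal_add (by norm_num) (by norm_num),
    show ((3:ℝ)/4 + 3/4) = 3/2 by norm_num, ← e32]

set_option maxHeartbeats 2000000 in
/-- τ satisfies τ(1/2) = 1, is symmetric, and preserves the density f. -/
theorem stmt13 :
    tauLhalf (1/2) = 1 ∧
    (∀ x ∈ Set.Icc (0:ℝ) 1, tauLhalf (1 - x) = tauLhalf x) ∧
    (∀ A : Set ℝ, MeasurableSet A → A ⊆ Set.Icc (0:ℝ) 1 →
      ∫⁻ x in Set.Icc (0:ℝ) 1 ∩ tauLhalf ⁻¹' A, densLhalf x = ∫⁻ x in A, densLhalf x) := by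
  refine ⟨by norm_num [tauLhalf], ?_, ?_⟩
  · intro x hx
    obtain ⟨h0, h1⟩ := hx
    have hy : (if 1 - x ≤ 1/2 then 1 - x else 1 - (1 - x))
        = (if x ≤ 1/2 then x else 1 - x) := by split_ifs <;> linarith
    simp only [tauLhalf]
    rw [hy]
  · intro A hA hsub
    have hT : MeasurableSet (tauLhalf ⁻¹' A) := tau_meas hA
    -- split the left-hand side into the 8 branches
    rw [peel (tauLhalf ⁻¹' A) (Ico 0 (1/8)) (Icc (1/8) 1) (Icc 0 1) hT measurableSet_Icc
        (Ico_union_Icc_eq_Icc (by norm_num) (by norm_num))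
        (Set.disjoint_left.2 fun x hx hx' => absurd hx'.1 (not_le.2 hx.2)),
      peel (tauLhalf ⁻¹' A) (Ico (1/8) (1/4)) (Icc (1/4) 1) (Icc (1/8) 1) hT measurableSet_Icc
        (Ico_union_Icc_eq_Icc (by norm_num) (by norm_num))
        (Set.disjoint_left.2 fun x hx hx' => absurd hx'.1 (not_le.2 hx.2)),
      peel (tauLhalf ⁻¹' A) (Ico (1/4) (11/24)) (Icc (11/24) 1) (Icc (1/4) 1) hT measurableSet_Icc
        (Ico_union_Icc_eq_Icc (by norm_num) (by norm_num))
        (Set.disjoint_left.2 fun x hx hx' => absurd hx'.1 (not_le.2 hx.2)),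
      peel (tauLhalf ⁻¹' A) (Ico (11/24) (1/2)) (Icc (1/2) 1) (Icc (11/24) 1) hT measurableSet_Icc
        (Ico_union_Icc_eq_Icc (by norm_num) (by norm_num))
        (Set.disjoint_left.2 fun x hx hx' => absurd hx'.1 (not_le.2 hx.2)),
      peel (tauLhalf ⁻¹' A) (Ico (1/2) (13/24)) (Icc (13/24) 1) (Icc (1/2) 1) hT measurableSet_Icc
        (Ico_union_Icc_eq_Icc (by norm_num) (by norm_num))
        (Set.disjoint_left.2 fun x hx hx' => absurd hx'.1 (not_le.2 hx.2)),
      peel (tauLhalf ⁻¹' A) (Icc (13/24) (3/4)) (Ioc (3/4) 1) (Icc (13/24) 1) hT measurableSet_Ioc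
        (Icc_union_Ioc_eq_Icc (by norm_num) (by norm_num))
        (Set.disjoint_left.2 fun x hx hx' => absurd hx.2 (not_le.2 hx'.1)),
      peel (tauLhalf ⁻¹' A) (Ioc (3/4) (7/8)) (Ioc (7/8) 1) (Ioc (3/4) 1) hT measurableSet_Ioc
        (Ioc_union_Ioc_eq_Ioc (by norm_num) (by norm_num))
        (Set.disjoint_left.2 fun x hx hx' => absurd hx.2 (not_le.2 hx'.1))]
    -- evaluate each branch
    rw [piece_integral A hA 2 0 (by norm_num) (Ico 0 (1/8)) (Ico 0 (1/4)) measurableSet_Ico (1/2)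
        (fun x hx => by obtain ⟨u, v⟩ := hx; simp only [tauLhalf]; split_ifs <;> linarith)
        (fun x hx => by obtain ⟨u, v⟩ := hx; unfold densLhalf; split_ifs with h
                        · exact absurd h.1 (by linarith)
                        · rfl)
        (by ext x; simp only [mem_preimage, mem_Ico]
            constructor <;> rintro ⟨u, v⟩ <;> constructor <;> linarith),
      piece_integral A hA (2/3) (1/6) (by norm_num) (Ico (1/8) (1/4)) (Ico (1/4) (1/3))
        measurableSet_Ico (1/2)
        (fun x hx => by obtain ⟨u, v⟩ := hx; simp only [tauLhalf]; split_ifs <;> linarith)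
        (fun x hx => by obtain ⟨u, v⟩ := hx; unfold densLhalf; split_ifs with h
                        · exact absurd h.1 (by linarith)
                        · rfl)
        (by ext x; simp only [mem_preimage, mem_Ico]
            constructor <;> rintro ⟨u, v⟩ <;> constructor <;> linarith),
      piece_integral A hA 2 (-(1/6)) (by norm_num) (Ico (1/4) (11/24)) (Ico (1/3) (3/4))
        measurableSet_Ico (3/2)
        (fun x hx => by obtain ⟨u, v⟩ := hx; simp only [tauLhalf]; split_ifs <;> linarith)
        (fun x hx => by obtain ⟨u, v⟩ := hx; unfold densLhalf; split_ifs with h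
                        · rfl
                        · exact absurd ⟨by linarith, by linarith⟩ h)
        (by ext x; simp only [mem_preimage, mem_Ico]
            constructor <;> rintro ⟨u, v⟩ <;> constructor <;> linarith),
      piece_integral A hA 6 (-2) (by norm_num) (Ico (11/24) (1/2)) (Ico (3/4) 1)
        measurableSet_Ico (3/2)
        (fun x hx => by obtain ⟨u, v⟩ := hx; simp only [tauLhalf]; split_ifs <;> linarith)
        (fun x hx => by obtain ⟨u, v⟩ := hx; unfold densLhalf; split_ifs with h
                        · rfl
                        · exact absurd ⟨by linarith, by linarith⟩ h)
        (by ext x; simp only [mem_preimage, mem_Ico]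
            constructor <;> rintro ⟨u, v⟩ <;> constructor <;> linarith),
      piece_integral A hA (-6) 4 (by norm_num) (Ico (1/2) (13/24)) (Ioc (3/4) 1)
        measurableSet_Ioc (3/2)
        (fun x hx => by obtain ⟨u, v⟩ := hx; simp only [tauLhalf]; split_ifs <;> linarith)
        (fun x hx => by obtain ⟨u, v⟩ := hx; unfold densLhalf; split_ifs with h
                        · rfl
                        · exact absurd ⟨by linarith, by linarith⟩ h)
        (by ext x; simp only [mem_preimage, mem_Ioc, mem_Ico]
            constructor <;> rintro ⟨u, v⟩ <;> constructor <;> linarith),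
      piece_integral A hA (-2) (11/6) (by norm_num) (Icc (13/24) (3/4)) (Icc (1/3) (3/4))
        measurableSet_Icc (3/2)
        (fun x hx => by obtain ⟨u, v⟩ := hx; simp only [tauLhalf]; split_ifs <;> linarith)
        (fun x hx => by obtain ⟨u, v⟩ := hx; unfold densLhalf; split_ifs with h
                        · rfl
                        · exact absurd ⟨by linarith, by linarith⟩ h)
        (by ext x; simp only [mem_preimage, mem_Icc]
            constructor <;> rintro ⟨u, v⟩ <;> constructor <;> linarith),
      piece_integral A hA (-(2/3)) (5/6) (by norm_num) (Ioc (3/4) (7/8)) (Ico (1/4) (1/3))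
        measurableSet_Ico (1/2)
        (fun x hx => by obtain ⟨u, v⟩ := hx; simp only [tauLhalf]; split_ifs <;> linarith)
        (fun x hx => by obtain ⟨u, v⟩ := hx; unfold densLhalf; split_ifs with h
                        · exact absurd h.2 (by linarith)
                        · rfl)
        (by ext x; simp only [mem_preimage, mem_Ico, mem_Ioc]
            constructor <;> rintro ⟨u, v⟩ <;> constructor <;> linarith),
      piece_integral A hA (-2) 2 (by norm_num) (Ioc (7/8) 1) (Ico 0 (1/4))
        measurableSet_Ico (1/2)
        (fun x hx => by obtain ⟨u, v⟩ := hx; simp only [tauLhalf]; split_ifs <;> linarith)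
        (fun x hx => by obtain ⟨u, v⟩ := hx; unfold densLhalf; split_ifs with h
                        · exact absurd h.2 (by linarith)
                        · rfl)
        (by ext x; simp only [mem_preimage, mem_Ico, mem_Ioc]
            constructor <;> rintro ⟨u, v⟩ <;> constructor <;> linarith)]
    rw [k1, k2, k3, k4, k5, k6, k7, k8]
    -- identify volumes that agree up to null sets
    have v1 : volume (Ico (3/4:ℝ) 1 ∩ A) = volume (Ioc (3/4:ℝ) 1 ∩ A) :=
      measure_congr (ae_eq_set_inter Ico_ae_eq_Ioc (ae_eq_refl A))
    have v2 : volume (Icc (1/3:ℝ) (3/4) ∩ A) = volume (Ico (1/3:ℝ) (3/4) ∩ A) :=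
      measure_congr (ae_eq_set_inter Ico_ae_eq_Icc.symm (ae_eq_refl A))
    rw [v1, v2]
    -- now compute the right-hand side
    have hAeq : A = Icc (0:ℝ) 1 ∩ A := (inter_eq_right.2 hsub).symm
    conv_rhs => rw [hAeq]
    rw [peel A (Ico 0 (1/4)) (Icc (1/4) 1) (Icc 0 1) hA measurableSet_Icc
        (Ico_union_Icc_eq_Icc (by norm_num) (by norm_num))
        (Set.disjoint_left.2 fun x hx hx' => absurd hx'.1 (not_le.2 hx.2)),
      peel A (Icc (1/4) (3/4)) (Ioc (3/4) 1) (Icc (1/4) 1) hA measurableSet_Ioc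
        (Icc_union_Ioc_eq_Icc (by norm_num) (by norm_num))
        (Set.disjoint_left.2 fun x hx hx' => absurd hx.2 (not_le.2 hx'.1)),
      const_on (Ico 0 (1/4) ∩ A) (measurableSet_Ico.inter hA) (1/2)
        (fun x hx => by obtain ⟨⟨u, v⟩, -⟩ := hx; unfold densLhalf
                        split_ifs with h
                        · exact absurd h.1 (by linarith)
                        · rfl),
      const_on (Icc (1/4) (3/4) ∩ A) (measurableSet_Icc.inter hA) (3/2)
        (fun x hx => by obtain ⟨⟨u, v⟩, -⟩ := hx; unfold densLhalf
                        split_ifs with h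
                        · rfl
                        · exact absurd ⟨by linarith, by linarith⟩ h),
      const_on (Ioc (3/4) 1 ∩ A) (measurableSet_Ioc.inter hA) (1/2)
        (fun x hx => by obtain ⟨⟨u, v⟩, -⟩ := hx; unfold densLhalf
                        split_ifs with h
                        · exact absurd h.2 (by linarith)
                        · rfl)]
    -- split the middle volume
    have v3 : volume (Icc (1/4:ℝ) (3/4) ∩ A)
        = volume (Ico (1/4:ℝ) (1/3) ∩ A) + volume (Ico (1/3:ℝ) (3/4) ∩ A) := by
      have h1 : volume (Icc (1/4:ℝ) (3/4) ∩ A) = volume (Ico (1/4:ℝ) (3/4) ∩ A) :=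
        measure_congr (ae_eq_set_inter Ico_ae_eq_Icc.symm (ae_eq_refl A))
      rw [h1, ← Ico_union_Ico_eq_Ico (show (1:ℝ)/4 ≤ 1/3 by norm_num)
          (show (1:ℝ)/3 ≤ 3/4 by norm_num), union_inter_distrib_right,
        measure_union ((Set.disjoint_left.2 fun x hx hx' =>
          absurd hx'.1 (not_le.2 hx.2)).mono inter_subset_left inter_subset_left)
          (measurableSet_Ico.inter hA)]
    rw [v3]
    rw [a1, a2]
    ring
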